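/- arXiv:0908.1631 — 3 statements merged into one kernel-verified Lean document; each statement's English description precedes it below -/
import Mathlib

section
/- The weak torsion of the nonlinear connection induced by the semispray S vanishes: the Frölicher–Nijenhuis bracket [J,h] = 0, i.e., for all smooth vector fields X, Y on E: [JX,hY] + [hX,JY] + (J∘h + h∘J)([X,Y]) − J([X,hY]) − J([hX,Y]) − h([X,JY]) − h([JX,Y]) = 0. -/
noncomputable section

/-- The local model `E = ℝ × (Fin n → ℝ) × (Fin n → ℝ)` of the first jet bundle `J¹π`,
with coordinates `(t, xⁱ, yⁱ)`.  Tangent vectors at a point are identified with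
elements of `E n` itself. -/
abbrev E (n : ℕ) : Type := ℝ × (Fin n → ℝ) × (Fin n → ℝ)

variable {n : ℕ}

/-- A map between normed spaces is `C^∞`-smooth. -/
def Cinf {α β : Type*} [NormedAddCommGroup α] [NormedSpace ℝ α]
    [NormedAddCommGroup β] [NormedSpace ℝ β] (f : α → β) : Prop :=
  ContDiff ℝ (⊤ : ℕ∞) f

/-- A tangent vector having only a `y`-component. -/
def ypart (w : Fin n → ℝ) : E n := (0, 0, w)

/-- The coordinate vector `∂/∂yⁱ`. -/
def pdy (i : Fin n) : E n := ypart (Pi.single i 1)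

/-- The coordinate vector `∂/∂xⁱ`. -/
def pdx (i : Fin n) : E n := (0, Pi.single i 1, 0)

/-- Action of a vector field `X` on a function `f`: `X(f)(p) = df_p(X(p))`. -/
def vfd (X : E n → E n) (f : E n → ℝ) : E n → ℝ := fun p => fderiv ℝ f p (X p)

/-- Lie bracket of vector fields on `E n`. -/
def lieb (X Y : E n → E n) : E n → E n :=
  fun p => fderiv ℝ Y p (X p) - fderiv ℝ X p (Y p)

/-- The semispray `S = ∂/∂t + Σ yⁱ ∂/∂xⁱ − 2 Σ Gⁱ ∂/∂yⁱ` associated to `G`. -/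
def Ssp (G : E n → Fin n → ℝ) : E n → E n := fun p => (1, p.2.2, fun i => -(2 * G p i))

/-- Nonlinear connection coefficients `Nⁱⱼ = ∂Gⁱ/∂yʲ`. -/
def Nc (G : E n → Fin n → ℝ) (i j : Fin n) : E n → ℝ :=
  fun p => fderiv ℝ (fun q => G q i) p (pdy j)

/-- `Nⁱ₀ = 2Gⁱ − Σⱼ Nⁱⱼ yʲ`. -/
def N0c (G : E n → Fin n → ℝ) (i : Fin n) : E n → ℝ :=
  fun p => 2 * G p i - ∑ j, Nc G i j p * p.2.2 j

/-- The horizontal vector field `δ/δxⁱ = ∂/∂xⁱ − Σⱼ Nʲᵢ ∂/∂yʲ`. -/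
def ddx (G : E n → Fin n → ℝ) (i : Fin n) : E n → E n :=
  fun p => (0, Pi.single i 1, fun j => -(Nc G j i p))

/-- The contact 1-form `δxⁱ = dxⁱ − yⁱ dt`. -/
def dxi (i : Fin n) : E n → E n → ℝ := fun p w => w.2.1 i - p.2.2 i * w.1

/-- The 1-form `δyⁱ = dyⁱ + Σⱼ Nⁱⱼ dxʲ + Nⁱ₀ dt`. -/
def dyi (G : E n → Fin n → ℝ) (i : Fin n) : E n → E n → ℝ :=
  fun p w => w.2.2 i + (∑ j, Nc G i j p * w.2.1 j) + N0c G i p * w.1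

/-- The vertical endomorphism `J = Σᵢ ∂/∂yⁱ ⊗ δxⁱ`. -/
def Jv : E n → E n → E n := fun p w => ypart (fun i => dxi i p w)

/-- The horizontal projector `h = S ⊗ dt + Σᵢ δ/δxⁱ ⊗ δxⁱ`. -/
def hv (G : E n → Fin n → ℝ) : E n → E n → E n :=
  fun p w => w.1 • Ssp G p + ∑ i, dxi i p w • ddx G i p

/-- Jacobi endomorphism components `Rⁱⱼ = 2 ∂Gⁱ/∂xʲ − Σₖ Nⁱₖ Nᵏⱼ − S(Nⁱⱼ)`. -/
def Rjac (G : E n → Fin n → ℝ) (i j : Fin n) : E n → ℝ := fun p =>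
  2 * fderiv ℝ (fun q => G q i) p (pdx j) - (∑ k, Nc G i k p * Nc G k j p)
    - vfd (Ssp G) (Nc G i j) p

/-- Curvature components `Rⁱⱼₖ = (δ/δxᵏ)(Nⁱⱼ) − (δ/δxʲ)(Nⁱₖ)`. -/
def Rcur (G : E n → Fin n → ℝ) (i j k : Fin n) : E n → ℝ := fun p =>
  fderiv ℝ (Nc G i j) p (ddx G k p) - fderiv ℝ (Nc G i k) p (ddx G j p)

/-- The Jacobi endomorphism `Φ = Σᵢⱼ Rʲᵢ ∂/∂yʲ ⊗ δxⁱ`. -/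
def Phi (G : E n → Fin n → ℝ) : E n → E n → E n :=
  fun p w => ypart (fun j => ∑ i, Rjac G j i p * dxi i p w)

/-- The tensor `Ψ = Σᵢ δ/δxⁱ ⊗ δyⁱ − Σᵢⱼ Rʲᵢ ∂/∂yʲ ⊗ δxⁱ`. -/
def Psi (G : E n → Fin n → ℝ) : E n → E n → E n :=
  fun p w => (∑ i, dyi G i p w • ddx G i p) - Phi G p w

/-- Lie derivative of a 1-form `θ` along `X`, evaluated on a vector field `Y`:
`(L_Xθ)(Y) = X(θ(Y)) − θ([X,Y])`. -/
def lieD (X : E n → E n) (θ : E n → E n → ℝ) (Y : E n → E n) : E n → ℝ :=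
  fun p => fderiv ℝ (fun q => θ q (Y q)) p (X p) - θ p (lieb X Y p)

/-- Exterior derivative of a 1-form: `dθ(X,Y) = X(θ(Y)) − Y(θ(X)) − θ([X,Y])`. -/
def extD (θ : E n → E n → ℝ) (X Y : E n → E n) : E n → ℝ :=
  fun p => fderiv ℝ (fun q => θ q (Y q)) p (X p) - fderiv ℝ (fun q => θ q (X q)) p (Y p)
    - θ p (lieb X Y p)

/-- Exterior derivative of a 1-form given as an operator on vector fields. -/
def extDop (α : (E n → E n) → E n → ℝ) (X Y : E n → E n) : E n → ℝ :=
  fun p => fderiv ℝ (α Y) p (X p) - fderiv ℝ (α X) p (Y p) - α (lieb X Y) p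

/-- The semi-basic 1-form `θ₀ dt + Σᵢ θᵢ δxⁱ`. -/
def sbform (θ0 : E n → ℝ) (θc : Fin n → E n → ℝ) : E n → E n → ℝ :=
  fun p w => θ0 p * w.1 + ∑ i, θc i p * dxi i p w

/-- `d_Jθ(X,Y) = dθ(JX,Y) + dθ(X,JY)` for a semi-basic 1-form `θ`. -/
def dJf (θ : E n → E n → ℝ) (X Y : E n → E n) : E n → ℝ :=
  fun p => extD θ (fun q => Jv q (X q)) Y p + extD θ X (fun q => Jv q (Y q)) p

/-- `d_hθ(X,Y) = dθ(hX,Y) + dθ(X,hY) − dθ(X,Y)` for a semi-basic 1-form `θ`. -/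
def dhf (G : E n → Fin n → ℝ) (θ : E n → E n → ℝ) (X Y : E n → E n) : E n → ℝ :=
  fun p => extD θ (fun q => hv G q (X q)) Y p + extD θ X (fun q => hv G q (Y q)) p
    - extD θ X Y p

/-- `d_Φθ(X,Y) = dθ(ΦX,Y) + dθ(X,ΦY)` for a semi-basic 1-form `θ`. -/
def dPhif (G : E n → Fin n → ℝ) (θ : E n → E n → ℝ) (X Y : E n → E n) : E n → ℝ :=
  fun p => extD θ (fun q => Phi G q (X q)) Y p + extD θ X (fun q => Phi G q (Y q)) p

/-- Lie derivative of the 2-form `dθ` along a vector field `SS`: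
`(L_S dθ)(X,Y) = S(dθ(X,Y)) − dθ([S,X],Y) − dθ(X,[S,Y])`. -/
def lieD2 (SS : E n → E n) (θ : E n → E n → ℝ) (X Y : E n → E n) : E n → ℝ :=
  fun p => fderiv ℝ (extD θ X Y) p (SS p) - extD θ (lieb SS X) Y p - extD θ X (lieb SS Y) p

/-- `∇dθ = L_S(dθ) − i_Ψ(dθ)`. -/
def nabD (G : E n → Fin n → ℝ) (θ : E n → E n → ℝ) (X Y : E n → E n) : E n → ℝ :=
  fun p => lieD2 (Ssp G) θ X Y p
    - (extD θ (fun q => Psi G q (X q)) Y p + extD θ X (fun q => Psi G q (Y q)) p)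

/-- The dynamical covariant derivative of an `n`-tuple of functions:
`(∇f)ᵢ = S(fᵢ) − Σⱼ Nʲᵢ fⱼ`. -/
def covd (G : E n → Fin n → ℝ) (f : Fin n → E n → ℝ) : Fin n → E n → ℝ :=
  fun i p => vfd (Ssp G) (f i) p - ∑ j, Nc G j i p * f j p
section Helpers

variable {n : ℕ}

lemma fd_fst {A : E n → E n} {p : E n} (hA : DifferentiableAt ℝ A p) (w : E n) :
    fderiv ℝ (fun q => (A q).1) p w = (fderiv ℝ A p w).1 := by
  rw [hA.hasFDerivAt.fst.fderiv]; rfl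

lemma fd_21 {A : E n → E n} {p : E n} (hA : DifferentiableAt ℝ A p) (i : Fin n) (w : E n) :
    fderiv ℝ (fun q => (A q).2.1 i) p w = (fderiv ℝ A p w).2.1 i := by
  have h : HasFDerivAt (fun q => (A q).2.1 i)
      ((ContinuousLinearMap.proj i).comp ((ContinuousLinearMap.fst ℝ (Fin n → ℝ) (Fin n → ℝ)).comp
        ((ContinuousLinearMap.snd ℝ ℝ ((Fin n → ℝ) × (Fin n → ℝ))).comp (fderiv ℝ A p)))) p :=
    (ContinuousLinearMap.proj (R := ℝ) (φ := fun _ : Fin n => ℝ) i).hasFDerivAt.comp p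
      hA.hasFDerivAt.snd.fst
  rw [h.fderiv]; rfl

lemma fd_22 {A : E n → E n} {p : E n} (hA : DifferentiableAt ℝ A p) (i : Fin n) (w : E n) :
    fderiv ℝ (fun q => (A q).2.2 i) p w = (fderiv ℝ A p w).2.2 i := by
  have h : HasFDerivAt (fun q => (A q).2.2 i)
      ((ContinuousLinearMap.proj i).comp ((ContinuousLinearMap.snd ℝ (Fin n → ℝ) (Fin n → ℝ)).comp
        ((ContinuousLinearMap.snd ℝ ℝ ((Fin n → ℝ) × (Fin n → ℝ))).comp (fderiv ℝ A p)))) p :=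
    (ContinuousLinearMap.proj (R := ℝ) (φ := fun _ : Fin n => ℝ) i).hasFDerivAt.comp p
      hA.hasFDerivAt.snd.snd
  rw [h.fderiv]; rfl

lemma lieb_fst {A B : E n → E n} {p : E n} (hA : DifferentiableAt ℝ A p)
    (hB : DifferentiableAt ℝ B p) :
    (lieb A B p).1
      = fderiv ℝ (fun q => (B q).1) p (A p) - fderiv ℝ (fun q => (A q).1) p (B p) := by
  simp [lieb, fd_fst hA, fd_fst hB]

lemma lieb_21 {A B : E n → E n} {p : E n} (hA : DifferentiableAt ℝ A p)
    (hB : DifferentiableAt ℝ B p) (i : Fin n) :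
    (lieb A B p).2.1 i
      = fderiv ℝ (fun q => (B q).2.1 i) p (A p) - fderiv ℝ (fun q => (A q).2.1 i) p (B p) := by
  simp [lieb, fd_21 hA, fd_21 hB]

lemma lieb_22 {A B : E n → E n} {p : E n} (hA : DifferentiableAt ℝ A p)
    (hB : DifferentiableAt ℝ B p) (i : Fin n) :
    (lieb A B p).2.2 i
      = fderiv ℝ (fun q => (B q).2.2 i) p (A p) - fderiv ℝ (fun q => (A q).2.2 i) p (B p) := by
  simp [lieb, fd_22 hA, fd_22 hB]

lemma Jv_fst (p w : E n) : (Jv p w).1 = 0 := rfl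
lemma Jv_21 (p w : E n) (i : Fin n) : (Jv p w).2.1 i = 0 := rfl
lemma Jv_22 (p w : E n) (i : Fin n) : (Jv p w).2.2 i = w.2.1 i - p.2.2 i * w.1 := rfl

lemma hv_fst (G : E n → Fin n → ℝ) (p w : E n) : (hv G p w).1 = w.1 := by
  simp [hv, Ssp, ddx, Prod.fst_sum]

lemma hv_21 (G : E n → Fin n → ℝ) (p w : E n) (k : Fin n) :
    (hv G p w).2.1 k = w.2.1 k := by
  simp only [hv, Ssp, ddx, dxi, Prod.snd_add, Prod.fst_add, Prod.smul_snd, Prod.smul_fst,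
    Prod.fst_sum, Prod.snd_sum, Pi.add_apply, Finset.sum_apply, Pi.smul_apply, smul_eq_mul,
    Pi.single_apply, mul_ite, mul_one, mul_zero]
  rw [Finset.sum_ite_eq Finset.univ k (fun i => w.2.1 i - p.2.2 i * w.1)]
  simp; ring

lemma hv_22 (G : E n → Fin n → ℝ) (p w : E n) (j : Fin n) :
    (hv G p w).2.2 j
      = (-2) * (w.1 * G p j) - ∑ i, Nc G j i p * (w.2.1 i - p.2.2 i * w.1) := by
  simp only [hv, Ssp, ddx, dxi, Prod.snd_add, Prod.smul_snd, Prod.snd_sum,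
    Pi.add_apply, Finset.sum_apply, Pi.smul_apply, smul_eq_mul]
  rw [sub_eq_add_neg, ← Finset.sum_neg_distrib]
  congr 1
  · ring
  · exact Finset.sum_congr rfl fun i _ => by ring

lemma ypart_eq_sum (c : Fin n → ℝ) : ypart c = ∑ k, c k • pdy k := by
  have hterm : ∀ k : Fin n, (c k • pdy k).2.2 = Pi.single k (c k) := by
    intro k; ext m
    simp [pdy, ypart, Pi.single_apply, mul_ite]
  have h3 : (∑ k, c k • pdy k).2.2 = c := by
    calc (∑ k, c k • pdy k).2.2 = ∑ k, (c k • pdy k).2.2 := by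
          simp [Prod.snd_sum]
      _ = ∑ k, Pi.single k (c k) := Finset.sum_congr rfl fun k _ => hterm k
      _ = c := Finset.univ_sum_single c
  have h1 : (∑ k, c k • pdy k).1 = 0 := by simp [Prod.fst_sum, pdy, ypart]
  have h2 : (∑ k, c k • pdy k).2.1 = 0 := by
    simp [Prod.snd_sum, Prod.fst_sum, pdy, ypart]
  rw [Prod.ext_iff, Prod.ext_iff]
  exact ⟨h1.symm, h2.symm, h3.symm⟩

lemma fd_ypart (f : E n → ℝ) (p : E n) (c : Fin n → ℝ) :
    fderiv ℝ f p (ypart c) = ∑ k, c k * fderiv ℝ f p (pdy k) := by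
  rw [ypart_eq_sum, map_sum]
  exact Finset.sum_congr rfl fun k _ => by rw [map_smul]; rfl

lemma cinf_comp_pi {f : E n → Fin n → ℝ} (hf : Cinf f) (j : Fin n) :
    Cinf (fun q => f q j) := (contDiff_pi.mp hf j)

lemma cinf_Nc {G : E n → Fin n → ℝ} (hG : Cinf G) (j i : Fin n) : Cinf (Nc G j i) := by
  have h1 : Cinf (fun q => G q j) := cinf_comp_pi hG j
  have h2 : ContDiff ℝ (⊤ : ℕ∞) (fderiv ℝ (fun q => G q j)) := by
    apply h1.fderiv_right
    exact_mod_cast le_top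
  exact h2.clm_apply contDiff_const

lemma Nc_symm {G : E n → Fin n → ℝ} (hG : Cinf G) (p : E n) (j i k : Fin n) :
    fderiv ℝ (Nc G j i) p (pdy k) = fderiv ℝ (Nc G j k) p (pdy i) := by
  have h1 : Cinf (fun q => G q j) := cinf_comp_pi hG j
  have hd : ∀ y, HasFDerivAt (fun q => G q j) (fderiv ℝ (fun q => G q j) y) y :=
    fun y => ((h1.differentiable (by simp)) y).hasFDerivAt
  have h2 : ContDiff ℝ (⊤ : ℕ∞) (fderiv ℝ (fun q => G q j)) := by
    apply h1.fderiv_right; exact_mod_cast le_top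
  have hd2 : HasFDerivAt (fderiv ℝ (fun q => G q j))
      (fderiv ℝ (fderiv ℝ (fun q => G q j)) p) p :=
    ((h2.differentiable (by simp)) p).hasFDerivAt
  have key : ∀ v w : E n, fderiv ℝ (fderiv ℝ (fun q => G q j)) p v w
      = fderiv ℝ (fderiv ℝ (fun q => G q j)) p w v :=
    second_derivative_symmetric hd hd2
  have eval : ∀ m : Fin n, ∀ w : E n, fderiv ℝ (Nc G j m) p w
      = fderiv ℝ (fderiv ℝ (fun q => G q j)) p w (pdy m) := by
    intro m w
    have h3 : HasFDerivAt (fun q => (fderiv ℝ (fun q' => G q' j) q) (pdy m))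
        ((fderiv ℝ (fderiv ℝ (fun q => G q j)) p).flip (pdy m)) p := by
      have := hd2.clm_apply (hasFDerivAt_const (pdy m) p)
      simpa using this
    have : fderiv ℝ (Nc G j m) p = (fderiv ℝ (fderiv ℝ (fun q => G q j)) p).flip (pdy m) := by
      rw [← h3.fderiv]; rfl
    rw [this]; rfl
  rw [eval i (pdy k), eval k (pdy i), key]

lemma etop : ((⊤:ℕ∞) : WithTop ℕ∞) ≠ 0 := by simp
lemma diff_of_cinf {α β : Type*} [NormedAddCommGroup α] [NormedSpace ℝ α]
    [NormedAddCommGroup β] [NormedSpace ℝ β] {f : α → β} (hf : Cinf f) :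
    Differentiable ℝ f := hf.differentiable (by simp)

lemma diff_Gj {G : E n → Fin n → ℝ} (hG : Cinf G) (j : Fin n) :
    Differentiable ℝ (fun q => G q j) := diff_of_cinf (cinf_comp_pi hG j)

lemma diff_Nc {G : E n → Fin n → ℝ} (hG : Cinf G) (j i : Fin n) :
    Differentiable ℝ (Nc G j i) := diff_of_cinf (cinf_Nc hG j i)

lemma diff_Jcomp {X : E n → E n} (hX : Differentiable ℝ X) :
    Differentiable ℝ (fun q => Jv q (X q)) := by
  show Differentiable ℝ (fun q => ((0:ℝ), (0: Fin n → ℝ),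
    fun i => (X q).2.1 i - q.2.2 i * (X q).1))
  fun_prop

lemma diff_hcomp {G : E n → Fin n → ℝ} (hG : Cinf G) {X : E n → E n}
    (hX : Differentiable ℝ X) : Differentiable ℝ (fun q => hv G q (X q)) := by
  show Differentiable ℝ (fun q => (X q).1 • Ssp G q
    + ∑ i, ((X q).2.1 i - q.2.2 i * (X q).1) • ddx G i q)
  have h1 : Differentiable ℝ (fun q => Ssp G q) := by
    refine (differentiable_const _).prodMk (Differentiable.prodMk ?_ ?_)
    · fun_prop
    · exact differentiable_pi.mpr fun i => ((diff_Gj hG i).const_mul 2).neg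
  have h2 : ∀ i : Fin n, Differentiable ℝ (fun q => ddx G i q) := by
    intro i
    refine (differentiable_const _).prodMk (Differentiable.prodMk (differentiable_const _) ?_)
    exact differentiable_pi.mpr fun j => (diff_Nc hG j i).neg
  have h3 : Differentiable ℝ (fun q => (X q).1 • Ssp G q) := by fun_prop
  apply h3.add
  apply Differentiable.fun_sum
  intro i _
  have := h2 i
  fun_prop

def Lyy {n : ℕ} (i : Fin n) : E n →L[ℝ] ℝ :=
  (ContinuousLinearMap.proj (R := ℝ) (φ := fun _ : Fin n => ℝ) i).comp
    ((ContinuousLinearMap.snd ℝ (Fin n → ℝ) (Fin n → ℝ)).comp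
      (ContinuousLinearMap.snd ℝ ℝ ((Fin n → ℝ) × (Fin n → ℝ))))

lemma Lyy_apply (i : Fin n) (w : E n) : Lyy i w = w.2.2 i := rfl

lemma hasFD_y (i : Fin n) (p : E n) : HasFDerivAt (fun q : E n => q.2.2 i) (Lyy i) p :=
  (Lyy i).hasFDerivAt

lemma fdJ22 {X : E n → E n} (hX : Differentiable ℝ X) (p : E n) (j : Fin n) (w : E n) :
    fderiv ℝ (fun q => (X q).2.1 j - q.2.2 j * (X q).1) p w
      = fderiv ℝ (fun q => (X q).2.1 j) p w
        - (p.2.2 j * fderiv ℝ (fun q => (X q).1) p w + (X p).1 * w.2.2 j) := by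
  have h1 : HasFDerivAt (fun q => (X q).2.1 j) (fderiv ℝ (fun q => (X q).2.1 j) p) p :=
    (by fun_prop : DifferentiableAt ℝ (fun q => (X q).2.1 j) p).hasFDerivAt
  have h3 : HasFDerivAt (fun q => (X q).1) (fderiv ℝ (fun q => (X q).1) p) p :=
    (by fun_prop : DifferentiableAt ℝ (fun q => (X q).1) p).hasFDerivAt
  rw [(h1.fun_sub ((hasFD_y j p).fun_mul h3)).fderiv]
  simp [Lyy_apply, smul_eq_mul]

lemma fdh22 {G : E n → Fin n → ℝ} (hG : Cinf G) {X : E n → E n}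
    (hX : Differentiable ℝ X) (p : E n) (j : Fin n) (w : E n) :
    fderiv ℝ (fun q => (-2)*((X q).1 * G q j)
        - ∑ i, Nc G j i q * ((X q).2.1 i - q.2.2 i * (X q).1)) p w
      = (-2)*((X p).1 * fderiv ℝ (fun q => G q j) p w
            + G p j * fderiv ℝ (fun q => (X q).1) p w)
        - ∑ i, (Nc G j i p * (fderiv ℝ (fun q => (X q).2.1 i) p w
              - (p.2.2 i * fderiv ℝ (fun q => (X q).1) p w + (X p).1 * w.2.2 i))
            + ((X p).2.1 i - p.2.2 i * (X p).1) * fderiv ℝ (Nc G j i) p w) := by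
  have h3 : HasFDerivAt (fun q => (X q).1) (fderiv ℝ (fun q => (X q).1) p) p :=
    (by fun_prop : DifferentiableAt ℝ (fun q => (X q).1) p).hasFDerivAt
  have hg : HasFDerivAt (fun q => G q j) (fderiv ℝ (fun q => G q j) p) p :=
    ((diff_Gj hG j) p).hasFDerivAt
  have hmain := ((h3.fun_mul hg).const_mul (-2)).fun_sub (HasFDerivAt.fun_sum (u := Finset.univ)
    (fun i _ => (((diff_Nc hG j i) p).hasFDerivAt.fun_mul
      (((by fun_prop : DifferentiableAt ℝ (fun q => (X q).2.1 i) p).hasFDerivAt).fun_sub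
        ((hasFD_y i p).fun_mul h3)))))
  rw [hmain.fderiv]
  simp only [ContinuousLinearMap.coe_sub', Pi.sub_apply, ContinuousLinearMap.add_apply,
    ContinuousLinearMap.coe_smul', Pi.smul_apply, ContinuousLinearMap.sum_apply,
    ContinuousLinearMap.coe_sub', smul_eq_mul, Lyy_apply]

lemma key22 {n : ℕ} (gj X1 Y1 yj dY1J dX1J dY1h dX1h dY1u dX1v sYj_h sXj_h sYj_u sXj_v : ℝ)
    (y Xx Yx N vYJ vXJ W : Fin n → ℝ) :
    -2 * (Y1 * ∑ k, (Xx k - y k * X1) * N k + gj * dY1J)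
      - (∑ x, N x * (vYJ x - (y x * dY1J + Y1 * (Xx x - y x * X1)))
         + ∑ x, (Xx x - y x * X1) * W x)
      - (sXj_h - (yj * dX1h + X1 * (-2 * (Y1 * gj) - ∑ i, N i * (Yx i - y i * Y1))))
      + (sYj_h - (yj * dY1h + Y1 * (-2 * (X1 * gj) - ∑ i, N i * (Xx i - y i * X1)))
         - (-2 * (X1 * ∑ k, (Yx k - y k * Y1) * N k + gj * dX1J)
            - (∑ x, N x * (vXJ x - (y x * dX1J + X1 * (Yx x - y x * Y1)))
               + ∑ x, (Xx x - y x * X1) * W x)))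
      + (sYj_u - sXj_v - yj * (dY1u - dX1v))
      + (-2 * (0 * gj) - ∑ x, N x * (0 - y x * 0))
      - (sYj_u - sXj_h - yj * (dY1u - dX1h))
      - (sYj_h - sXj_v - yj * (dY1h - dX1v))
      - (-2 * ((0 - dX1J) * gj) - ∑ x, N x * (0 - vXJ x - y x * (0 - dX1J)))
      - (-2 * ((dY1J - 0) * gj) - ∑ x, N x * (vYJ x - 0 - y x * (dY1J - 0)))
      = 0 := by
  have h : (∑ x : Fin n,
      (-2 * (Y1 * ((Xx x - y x * X1) * N x))
        - N x * (vYJ x - (y x * dY1J + Y1 * (Xx x - y x * X1)))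
        - (Xx x - y x * X1) * W x
        - X1 * (N x * (Yx x - y x * Y1))
        + Y1 * (N x * (Xx x - y x * X1))
        + 2 * (X1 * ((Yx x - y x * Y1) * N x))
        + N x * (vXJ x - (y x * dX1J + X1 * (Yx x - y x * Y1)))
        + (Xx x - y x * X1) * W x
        - N x * (0 - y x * 0)
        + N x * (0 - vXJ x - y x * (0 - dX1J))
        + N x * (vYJ x - 0 - y x * (dY1J - 0)))) = 0 :=
    Finset.sum_eq_zero fun x _ => by ring
  have expand : -2 * (Y1 * ∑ k, (Xx k - y k * X1) * N k + gj * dY1J)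
      - (∑ x, N x * (vYJ x - (y x * dY1J + Y1 * (Xx x - y x * X1)))
         + ∑ x, (Xx x - y x * X1) * W x)
      - (sXj_h - (yj * dX1h + X1 * (-2 * (Y1 * gj) - ∑ i, N i * (Yx i - y i * Y1))))
      + (sYj_h - (yj * dY1h + Y1 * (-2 * (X1 * gj) - ∑ i, N i * (Xx i - y i * X1)))
         - (-2 * (X1 * ∑ k, (Yx k - y k * Y1) * N k + gj * dX1J)
            - (∑ x, N x * (vXJ x - (y x * dX1J + X1 * (Yx x - y x * Y1)))
               + ∑ x, (Xx x - y x * X1) * W x)))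
      + (sYj_u - sXj_v - yj * (dY1u - dX1v))
      + (-2 * (0 * gj) - ∑ x, N x * (0 - y x * 0))
      - (sYj_u - sXj_h - yj * (dY1u - dX1h))
      - (sYj_h - sXj_v - yj * (dY1h - dX1v))
      - (-2 * ((0 - dX1J) * gj) - ∑ x, N x * (0 - vXJ x - y x * (0 - dX1J)))
      - (-2 * ((dY1J - 0) * gj) - ∑ x, N x * (vYJ x - 0 - y x * (dY1J - 0)))
      = (∑ x : Fin n,
      (-2 * (Y1 * ((Xx x - y x * X1) * N x))
        - N x * (vYJ x - (y x * dY1J + Y1 * (Xx x - y x * X1)))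
        - (Xx x - y x * X1) * W x
        - X1 * (N x * (Yx x - y x * Y1))
        + Y1 * (N x * (Xx x - y x * X1))
        + 2 * (X1 * ((Yx x - y x * Y1) * N x))
        + N x * (vXJ x - (y x * dX1J + X1 * (Yx x - y x * Y1)))
        + (Xx x - y x * X1) * W x
        - N x * (0 - y x * 0)
        + N x * (0 - vXJ x - y x * (0 - dX1J))
        + N x * (vYJ x - 0 - y x * (dY1J - 0))))
      + (-2 * (gj * dY1J)
        - (sXj_h - (yj * dX1h + X1 * (-2 * (Y1 * gj))))
        + (sYj_h - (yj * dY1h + Y1 * (-2 * (X1 * gj))) - (-2 * (gj * dX1J)))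
        + (sYj_u - sXj_v - yj * (dY1u - dX1v))
        + (-2 * (0 * gj))
        - (sYj_u - sXj_h - yj * (dY1u - dX1h))
        - (sYj_h - sXj_v - yj * (dY1h - dX1v))
        - (-2 * ((0 - dX1J) * gj))
        - (-2 * ((dY1J - 0) * gj))) := by
    simp only [mul_add, mul_sub, add_mul, sub_mul, neg_mul, mul_neg, neg_neg, neg_sub,
      sub_zero, zero_sub, mul_zero, zero_mul, Finset.sum_add_distrib, Finset.sum_sub_distrib,
      Finset.mul_sum, Finset.sum_neg_distrib, Finset.sum_const_zero]
    simp only [mul_comm, mul_left_comm, mul_assoc]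
    ring_nf
  rw [expand, h]
  ring

set_option maxHeartbeats 1000000

/-- The weak torsion of the nonlinear connection induced by `S`
vanishes: the Frölicher–Nijenhuis bracket `[J,h] = 0`, i.e. for all smooth vector
fields `X, Y`:
`[JX,hY] + [hX,JY] + (J∘h + h∘J)([X,Y]) − J([X,hY]) − J([hX,Y]) − h([X,JY]) − h([JX,Y]) = 0`. -/
theorem stmt3 (n : ℕ) (hn : 1 ≤ n) (G : E n → Fin n → ℝ) (hG : Cinf G) :
    ∀ X Y : E n → E n, Cinf X → Cinf Y → ∀ p : E n,
      lieb (fun q => Jv q (X q)) (fun q => hv G q (Y q)) p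
      + lieb (fun q => hv G q (X q)) (fun q => Jv q (Y q)) p
      + Jv p (hv G p (lieb X Y p)) + hv G p (Jv p (lieb X Y p))
      - Jv p (lieb X (fun q => hv G q (Y q)) p)
      - Jv p (lieb (fun q => hv G q (X q)) Y p)
      - hv G p (lieb X (fun q => Jv q (Y q)) p)
      - hv G p (lieb (fun q => Jv q (X q)) Y p) = 0 := by
  intro X Y hX hY p
  have hXd := diff_of_cinf hX
  have hYd := diff_of_cinf hY
  have hJX : DifferentiableAt ℝ (fun q => Jv q (X q)) p := (diff_Jcomp hXd) p
  have hJY : DifferentiableAt ℝ (fun q => Jv q (Y q)) p := (diff_Jcomp hYd) p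
  have hhX : DifferentiableAt ℝ (fun q => hv G q (X q)) p := (diff_hcomp hG hXd) p
  have hhY : DifferentiableAt ℝ (fun q => hv G q (Y q)) p := (diff_hcomp hG hYd) p
  have hXp : DifferentiableAt ℝ X p := hXd p
  have hYp : DifferentiableAt ℝ Y p := hYd p
  have EG : ∀ (Z : E n → E n) (j : Fin n), fderiv ℝ (fun q => G q j) p (Jv p (Z p))
      = ∑ k, ((Z p).2.1 k - p.2.2 k * (Z p).1) * Nc G j k p := by
    intro Z j
    rw [show Jv p (Z p) = ypart (fun k => (Z p).2.1 k - p.2.2 k * (Z p).1) from rfl,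
      fd_ypart]
    rfl
  have EN : ∀ (Z : E n → E n) (j i : Fin n), fderiv ℝ (Nc G j i) p (Jv p (Z p))
      = ∑ k, ((Z p).2.1 k - p.2.2 k * (Z p).1) * fderiv ℝ (Nc G j i) p (pdy k) := by
    intro Z j i
    rw [show Jv p (Z p) = ypart (fun k => (Z p).2.1 k - p.2.2 k * (Z p).1) from rfl,
      fd_ypart]
  refine Prod.ext_iff.mpr ⟨?_, Prod.ext_iff.mpr ⟨?_, ?_⟩⟩
  · -- t-component
    simp only [Prod.fst_add, Prod.fst_sub, lieb_fst hJX hhY, lieb_fst hhX hJY,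
      lieb_fst hXp hhY, lieb_fst hhX hYp, lieb_fst hXp hJY, lieb_fst hJX hYp,
      Jv_fst, hv_fst, fderiv_fun_const, Pi.zero_apply, ContinuousLinearMap.zero_apply,
      Prod.fst_zero]
    ring
  · -- x-components
    funext k
    simp only [Prod.snd_add, Prod.snd_sub, Prod.fst_add, Prod.fst_sub,
      Pi.add_apply, Pi.sub_apply, Prod.fst_zero, Prod.snd_zero, Pi.zero_apply,
      lieb_21 hJX hhY, lieb_21 hhX hJY, lieb_21 hXp hhY, lieb_21 hhX hYp,
      lieb_21 hXp hJY, lieb_21 hJX hYp,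
      Jv_21, hv_21, Jv_fst, hv_fst, fderiv_fun_const, Pi.zero_apply,
      ContinuousLinearMap.zero_apply]
    ring
  · -- y-components
    funext j
    simp only [Prod.snd_add, Prod.snd_sub, Pi.add_apply, Pi.sub_apply,
      Prod.snd_zero, Pi.zero_apply,
      lieb_22 hJX hhY, lieb_22 hhX hJY, lieb_22 hXp hhY, lieb_22 hhX hYp,
      lieb_22 hXp hJY, lieb_22 hJX hYp,
      Jv_22, hv_22, hv_fst, hv_21, Jv_fst, Jv_21,
      lieb_fst hXp hYp, lieb_21 hXp hYp,
      lieb_fst hXp hhY, lieb_fst hhX hYp, lieb_fst hXp hJY, lieb_fst hJX hYp,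
      lieb_21 hXp hhY, lieb_21 hhX hYp, lieb_21 hXp hJY, lieb_21 hJX hYp]
    simp only [fdJ22 hXd p, fdJ22 hYd p, fdh22 hG hXd p, fdh22 hG hYd p,
      Jv_22, Jv_fst, Jv_21, hv_22, hv_fst, hv_21, EG, EN,
      fderiv_fun_const, Pi.zero_apply, ContinuousLinearMap.zero_apply]
    have Hswap : ∑ x, (((Y p).2.1 x - p.2.2 x * (Y p).1)
          * ∑ k, (((X p).2.1 k - p.2.2 k * (X p).1) * fderiv ℝ (Nc G j x) p (pdy k)))
        = ∑ x, (((X p).2.1 x - p.2.2 x * (X p).1)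
          * ∑ k, (((Y p).2.1 k - p.2.2 k * (Y p).1) * fderiv ℝ (Nc G j x) p (pdy k))) := by
      simp only [Finset.mul_sum]
      rw [Finset.sum_comm]
      exact Finset.sum_congr rfl fun u _ => Finset.sum_congr rfl fun v _ => by
        rw [Nc_symm hG p j v u]; ring
    simp only [Finset.sum_add_distrib]
    rw [Hswap]
    exact key22 (G p j) (X p).1 (Y p).1 (p.2.2 j)
      ((fderiv ℝ (fun q => (Y q).1) p) (Jv p (X p)))
      ((fderiv ℝ (fun q => (X q).1) p) (Jv p (Y p)))
      ((fderiv ℝ (fun q => (Y q).1) p) (hv G p (X p)))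
      ((fderiv ℝ (fun q => (X q).1) p) (hv G p (Y p)))
      ((fderiv ℝ (fun q => (Y q).1) p) (X p))
      ((fderiv ℝ (fun q => (X q).1) p) (Y p))
      ((fderiv ℝ (fun q => (Y q).2.1 j) p) (hv G p (X p)))
      ((fderiv ℝ (fun q => (X q).2.1 j) p) (hv G p (Y p)))
      ((fderiv ℝ (fun q => (Y q).2.1 j) p) (X p))
      ((fderiv ℝ (fun q => (X q).2.1 j) p) (Y p))
      p.2.2 (X p).2.1 (Y p).2.1 (fun x => Nc G j x p)
      (fun x => (fderiv ℝ (fun q => (Y q).2.1 x) p) (Jv p (X p)))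
      (fun x => (fderiv ℝ (fun q => (X q).2.1 x) p) (Jv p (Y p)))
      (fun x => ∑ k, ((Y p).2.1 k - p.2.2 k * (Y p).1) * (fderiv ℝ (Nc G j x) p) (pdy k))

end Helpers
end
end

section
/- The Jacobi endomorphism components and the curvature components satisfy, for all indices i, j, k: ∂R^k_j/∂y^i − ∂R^k_i/∂y^j = 3 R^k_{ij}. -/
noncomputable section

variable {n : ℕ}

namespace S6

def Dd (f : E n → ℝ) (v : E n) : E n → ℝ := fun p => fderiv ℝ f p v

lemma Dd_contDiff {f : E n → ℝ} (hf : ContDiff ℝ (⊤ : ℕ∞) f) (v : E n) :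
    ContDiff ℝ (⊤ : ℕ∞) (Dd f v) :=
  (hf.fderiv_right (by exact_mod_cast le_top)).clm_apply contDiff_const

lemma Dd_diff {f : E n → ℝ} (hf : ContDiff ℝ (⊤ : ℕ∞) f) (v : E n) :
    Differentiable ℝ (Dd f v) := (Dd_contDiff hf v).differentiable (by simp)

lemma Dd_swap {f : E n → ℝ} (hf : ContDiff ℝ (⊤ : ℕ∞) f) (v w p : E n) :
    fderiv ℝ (Dd f v) p w = fderiv ℝ (Dd f w) p v := by
  have hd : Differentiable ℝ f := hf.differentiable (by simp)
  have hdd : DifferentiableAt ℝ (fderiv ℝ f) p :=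
    ((hf.fderiv_right (m := (⊤ : ℕ∞)) (by exact_mod_cast le_top)).differentiable
      (by simp)) p
  have h : ∀ u : E n, fderiv ℝ (Dd f u) p = (fderiv ℝ (fderiv ℝ f) p).flip u := by
    intro u
    have h2 := fderiv_clm_apply (c := fderiv ℝ f) (u := fun _ => u) hdd (differentiableAt_const u)
    have h3 : Dd f u = fun q => (fderiv ℝ f q) ((fun _ : E n => u) q) := rfl
    rw [h3, h2]
    simp
  rw [h v, h w]
  simp only [ContinuousLinearMap.flip_apply]
  exact second_derivative_symmetric (fun y => (hd y).hasFDerivAt) hdd.hasFDerivAt w v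


lemma fd_add {f g : E n → ℝ} {p : E n} (hf : DifferentiableAt ℝ f p)
    (hg : DifferentiableAt ℝ g p) (v : E n) :
    fderiv ℝ (fun q => f q + g q) p v = fderiv ℝ f p v + fderiv ℝ g p v := by
  rw [fderiv_fun_add hf hg]; rfl

lemma fd_sub {f g : E n → ℝ} {p : E n} (hf : DifferentiableAt ℝ f p)
    (hg : DifferentiableAt ℝ g p) (v : E n) :
    fderiv ℝ (fun q => f q - g q) p v = fderiv ℝ f p v - fderiv ℝ g p v := by
  rw [fderiv_fun_sub hf hg]; rfl

lemma fd_mul {f g : E n → ℝ} {p : E n} (hf : DifferentiableAt ℝ f p)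
    (hg : DifferentiableAt ℝ g p) (v : E n) :
    fderiv ℝ (fun q => f q * g q) p v = fderiv ℝ f p v * g p + f p * fderiv ℝ g p v := by
  rw [fderiv_fun_mul hf hg]
  simp [ContinuousLinearMap.add_apply, ContinuousLinearMap.smul_apply]
  ring

lemma fd_const_mul {f : E n → ℝ} {p : E n} (hf : DifferentiableAt ℝ f p) (c : ℝ) (v : E n) :
    fderiv ℝ (fun q => c * f q) p v = c * fderiv ℝ f p v := by
  rw [fderiv_const_mul hf c]; simp

lemma fd_sum {F : Fin n → E n → ℝ} {p : E n} (h : ∀ l, DifferentiableAt ℝ (F l) p) (v : E n) :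
    fderiv ℝ (fun q => ∑ l, F l q) p v = ∑ l, fderiv ℝ (F l) p v := by
  rw [fderiv_fun_sum (fun l _ => h l)]
  simp

def coordY (l : Fin n) : E n →L[ℝ] ℝ :=
  (ContinuousLinearMap.proj l).comp
    ((ContinuousLinearMap.snd ℝ (Fin n → ℝ) (Fin n → ℝ)).comp
      (ContinuousLinearMap.snd ℝ ℝ ((Fin n → ℝ) × (Fin n → ℝ))))

lemma coordY_fun (l : Fin n) : (fun q : E n => q.2.2 l) = ⇑(coordY (n := n) l) := rfl

lemma coordY_diff (l : Fin n) : Differentiable ℝ (fun q : E n => q.2.2 l) := by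
  rw [coordY_fun]; exact (coordY l).differentiable

lemma fd_coordY (l : Fin n) (p v : E n) :
    fderiv ℝ (fun q : E n => q.2.2 l) p v = v.2.2 l := by
  rw [coordY_fun, ContinuousLinearMap.fderiv]; rfl

lemma clm_decomp (L : E n →L[ℝ] ℝ) (a : ℝ) (b c : Fin n → ℝ) :
    L (a, b, c) = a * L (1, 0, 0) + (∑ l, b l * L (pdx l)) + ∑ l, c l * L (pdy l) := by
  have hv : ((a, b, c) : E n)
      = a • ((1 : ℝ), (0 : Fin n → ℝ), (0 : Fin n → ℝ))
        + (∑ l, b l • pdx l) + ∑ l, c l • pdy l := by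
    have hb : (∑ l, b l • pdx l) = ((0 : ℝ), b, (0 : Fin n → ℝ)) := by
      refine Prod.ext ?_ (Prod.ext ?_ ?_)
      · simp [Prod.fst_sum, pdx]
      · rw [Prod.snd_sum, Prod.fst_sum]
        funext x
        simp [pdx, Finset.sum_apply, Pi.single_apply]
      · simp [Prod.snd_sum, pdx]
    have hc : (∑ l, c l • pdy l) = ((0 : ℝ), (0 : Fin n → ℝ), c) := by
      refine Prod.ext ?_ (Prod.ext ?_ ?_)
      · simp [Prod.fst_sum, pdy, ypart]
      · simp [Prod.snd_sum, Prod.fst_sum, pdy, ypart]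
      · rw [Prod.snd_sum, Prod.snd_sum]
        funext x
        simp [pdy, ypart, Finset.sum_apply, Pi.single_apply]
    rw [hb, hc]
    refine Prod.ext ?_ (Prod.ext ?_ ?_) <;> simp
  rw [hv, map_add, map_add, map_smul, map_sum, map_sum]
  simp [smul_eq_mul]


variable {G : E n → Fin n → ℝ}

lemma hg (hG : Cinf G) (k : Fin n) : ContDiff ℝ (⊤ : ℕ∞) (fun p => G p k) :=
  contDiff_pi.mp hG k

lemma Nc_eq (k j : Fin n) : Nc G k j = Dd (fun p => G p k) (pdy j) := rfl

lemma hN (hG : Cinf G) (k j : Fin n) : ContDiff ℝ (⊤ : ℕ∞) (Nc G k j) :=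
  Dd_contDiff (hg hG k) (pdy j)

lemma vfd_expand (G : E n → Fin n → ℝ) (f : E n → ℝ) :
    vfd (Ssp G) f = fun p => Dd f (1, 0, 0) p + (∑ l, p.2.2 l * Dd f (pdx l) p)
      - 2 * ∑ l, G p l * Dd f (pdy l) p := by
  funext p
  have h := clm_decomp (fderiv ℝ f p) 1 p.2.2 (fun l => -(2 * G p l))
  have h0 : vfd (Ssp G) f p = fderiv ℝ f p (1, p.2.2, fun l => -(2 * G p l)) := rfl
  rw [h0, h]
  have h2 : (∑ l, -(2 * G p l) * fderiv ℝ f p (pdy l))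
      = -(2 * ∑ l, G p l * Dd f (pdy l) p) := by
    rw [Finset.mul_sum, ← Finset.sum_neg_distrib]
    exact Finset.sum_congr rfl fun l _ => by simp [Dd]; ring
  rw [h2]
  simp [Dd]
  ring


lemma sum_single_mul (a : Fin n → ℝ) (i : Fin n) :
    (∑ l, (Pi.single i (1 : ℝ) : Fin n → ℝ) l * a l) = a i := by
  simp [Pi.single_apply]

lemma fderiv_vfd (hG : Cinf G) {f : E n → ℝ} (hf : ContDiff ℝ (⊤ : ℕ∞) f) (p : E n) (i : Fin n) :
    fderiv ℝ (vfd (Ssp G) f) p (pdy i)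
      = Dd f (pdx i) p - 2 * (∑ l, Nc G l i p * Dd f (pdy l) p)
        + vfd (Ssp G) (Dd f (pdy i)) p := by
  have hgl : ∀ l, ContDiff ℝ (⊤ : ℕ∞) (fun p => G p l) := hg hG
  have dA : DifferentiableAt ℝ (Dd f ((1 : ℝ), (0 : Fin n → ℝ), (0 : Fin n → ℝ))) p :=
    Dd_diff hf _ p
  have dB2 : ∀ l, DifferentiableAt ℝ (fun q : E n => q.2.2 l * Dd f (pdx l) q) p :=
    fun l => ((coordY_diff l) p).mul (Dd_diff hf _ p)
  have dB : DifferentiableAt ℝ (fun q : E n => ∑ l, q.2.2 l * Dd f (pdx l) q) p :=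
    DifferentiableAt.fun_sum (fun l _ => dB2 l)
  have dC2 : ∀ l, DifferentiableAt ℝ (fun q : E n => G q l * Dd f (pdy l) q) p :=
    fun l => (((hgl l).differentiable (by simp)) p).mul (Dd_diff hf _ p)
  have dC' : DifferentiableAt ℝ (fun q : E n => ∑ l, G q l * Dd f (pdy l) q) p :=
    DifferentiableAt.fun_sum (fun l _ => dC2 l)
  have dC : DifferentiableAt ℝ (fun q : E n => 2 * ∑ l, G q l * Dd f (pdy l) q) p :=
    dC'.const_mul 2
  have dAB : DifferentiableAt ℝ
      (fun q : E n => Dd f ((1 : ℝ), (0 : Fin n → ℝ), (0 : Fin n → ℝ)) q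
        + ∑ l, q.2.2 l * Dd f (pdx l) q) p := dA.add dB
  have eB : fderiv ℝ (fun q : E n => ∑ l, q.2.2 l * Dd f (pdx l) q) p (pdy i)
      = Dd f (pdx i) p + ∑ l, p.2.2 l * fderiv ℝ (Dd f (pdy i)) p (pdx l) := by
    calc fderiv ℝ (fun q : E n => ∑ l, q.2.2 l * Dd f (pdx l) q) p (pdy i)
        = ∑ l, fderiv ℝ (fun q : E n => q.2.2 l * Dd f (pdx l) q) p (pdy i) :=
          fd_sum (fun l => dB2 l) _
      _ = ∑ l, ((pdy i).2.2 l * Dd f (pdx l) p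
            + p.2.2 l * fderiv ℝ (Dd f (pdy i)) p (pdx l)) := by
          refine Finset.sum_congr rfl fun l _ => ?_
          rw [fd_mul ((coordY_diff l) p) (Dd_diff hf _ p), fd_coordY,
            Dd_swap hf (pdx l) (pdy i) p]
      _ = Dd f (pdx i) p + ∑ l, p.2.2 l * fderiv ℝ (Dd f (pdy i)) p (pdx l) := by
          rw [Finset.sum_add_distrib]
          congr 1
          exact sum_single_mul (fun l => Dd f (pdx l) p) i
  have eC : fderiv ℝ (fun q : E n => 2 * ∑ l, G q l * Dd f (pdy l) q) p (pdy i)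
      = 2 * ∑ l, (Nc G l i p * Dd f (pdy l) p
          + G p l * fderiv ℝ (Dd f (pdy i)) p (pdy l)) := by
    calc fderiv ℝ (fun q : E n => 2 * ∑ l, G q l * Dd f (pdy l) q) p (pdy i)
        = 2 * fderiv ℝ (fun q : E n => ∑ l, G q l * Dd f (pdy l) q) p (pdy i) :=
          fd_const_mul dC' 2 _
      _ = 2 * ∑ l, fderiv ℝ (fun q : E n => G q l * Dd f (pdy l) q) p (pdy i) := by
          rw [fd_sum (fun l => dC2 l)]
      _ = 2 * ∑ l, (Nc G l i p * Dd f (pdy l) p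
            + G p l * fderiv ℝ (Dd f (pdy i)) p (pdy l)) := by
          congr 1
          refine Finset.sum_congr rfl fun l _ => ?_
          rw [fd_mul (((hgl l).differentiable (by simp)) p)
            (Dd_diff hf _ p), Dd_swap hf (pdy l) (pdy i) p]
          rfl
  calc fderiv ℝ (vfd (Ssp G) f) p (pdy i)
      = fderiv ℝ (fun q : E n =>
          (Dd f ((1 : ℝ), (0 : Fin n → ℝ), (0 : Fin n → ℝ)) q
            + ∑ l, q.2.2 l * Dd f (pdx l) q)
          - 2 * ∑ l, G q l * Dd f (pdy l) q) p (pdy i) := by rw [vfd_expand G f]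
    _ = fderiv ℝ (fun q : E n =>
            Dd f ((1 : ℝ), (0 : Fin n → ℝ), (0 : Fin n → ℝ)) q
              + ∑ l, q.2.2 l * Dd f (pdx l) q) p (pdy i)
          - fderiv ℝ (fun q : E n => 2 * ∑ l, G q l * Dd f (pdy l) q) p (pdy i) :=
        fd_sub dAB dC _
    _ = (fderiv ℝ (Dd f ((1 : ℝ), (0 : Fin n → ℝ), (0 : Fin n → ℝ))) p (pdy i)
          + fderiv ℝ (fun q : E n => ∑ l, q.2.2 l * Dd f (pdx l) q) p (pdy i))
          - fderiv ℝ (fun q : E n => 2 * ∑ l, G q l * Dd f (pdy l) q) p (pdy i) := by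
        rw [fd_add dA dB]
    _ = (fderiv ℝ (Dd f (pdy i)) p ((1 : ℝ), (0 : Fin n → ℝ), (0 : Fin n → ℝ))
          + (Dd f (pdx i) p + ∑ l, p.2.2 l * fderiv ℝ (Dd f (pdy i)) p (pdx l)))
          - 2 * ∑ l, (Nc G l i p * Dd f (pdy l) p
              + G p l * fderiv ℝ (Dd f (pdy i)) p (pdy l)) := by
        rw [Dd_swap hf _ (pdy i) p, eB, eC]
    _ = Dd f (pdx i) p - 2 * (∑ l, Nc G l i p * Dd f (pdy l) p)
        + vfd (Ssp G) (Dd f (pdy i)) p := by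
        rw [vfd_expand G (Dd f (pdy i))]
        simp only [Dd]
        rw [Finset.sum_add_distrib]
        ring


lemma vfd_diff (hG : Cinf G) {f : E n → ℝ} (hf : ContDiff ℝ (⊤ : ℕ∞) f) :
    Differentiable ℝ (vfd (Ssp G) f) := by
  rw [vfd_expand G f]
  have h1 : Differentiable ℝ (fun q : E n => ∑ l, q.2.2 l * Dd f (pdx l) q) :=
    fun p => DifferentiableAt.fun_sum fun l _ => ((coordY_diff l) p).mul (Dd_diff hf _ p)
  have h2 : Differentiable ℝ (fun q : E n => 2 * ∑ l, G q l * Dd f (pdy l) q) :=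
    fun p => DifferentiableAt.const_mul
      (DifferentiableAt.fun_sum fun l _ =>
        (((hg hG l).differentiable (by simp)) p).mul (Dd_diff hf _ p)) 2
  exact fun p => ((Dd_diff hf _ p).add (h1 p)).sub (h2 p)

lemma Rjac_deriv (hG : Cinf G) (k j i : Fin n) (p : E n) :
    fderiv ℝ (Rjac G k j) p (pdy i)
      = 2 * fderiv ℝ (Nc G k i) p (pdx j)
        - (∑ m, (fderiv ℝ (Nc G k i) p (pdy m) * Nc G m j p
            + Nc G k m p * fderiv ℝ (Nc G m i) p (pdy j)))
        - (fderiv ℝ (Nc G k j) p (pdx i)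
            - 2 * (∑ m, Nc G m i p * fderiv ℝ (Nc G k j) p (pdy m))
            + vfd (Ssp G) (Dd (Nc G k j) (pdy i)) p) := by
  have hgk := hg hG k
  have dN : ∀ a b : Fin n, DifferentiableAt ℝ (Nc G a b) p :=
    fun a b => ((hN hG a b).differentiable (by simp)) p
  have d1 : DifferentiableAt ℝ (fun q : E n => 2 * fderiv ℝ (fun q' => G q' k) q (pdx j)) p :=
    DifferentiableAt.const_mul (Dd_diff hgk (pdx j) p) 2
  have d2 : DifferentiableAt ℝ (fun q : E n => ∑ m, Nc G k m q * Nc G m j q) p :=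
    DifferentiableAt.fun_sum fun m _ => (dN k m).mul (dN m j)
  have d3 : DifferentiableAt ℝ (vfd (Ssp G) (Nc G k j)) p := (vfd_diff hG (hN hG k j)) p
  have e1 : fderiv ℝ (fun q : E n => 2 * fderiv ℝ (fun q' => G q' k) q (pdx j)) p (pdy i)
      = 2 * fderiv ℝ (Nc G k i) p (pdx j) := by
    have h := fd_const_mul (f := Dd (fun q => G q k) (pdx j)) (Dd_diff hgk (pdx j) p) 2 (pdy i)
    rw [Dd_swap hgk (pdx j) (pdy i) p] at h
    exact h
  have e2 : fderiv ℝ (fun q : E n => ∑ m, Nc G k m q * Nc G m j q) p (pdy i)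
      = ∑ m, (fderiv ℝ (Nc G k i) p (pdy m) * Nc G m j p
          + Nc G k m p * fderiv ℝ (Nc G m i) p (pdy j)) := by
    have h := fd_sum (F := fun m q => Nc G k m q * Nc G m j q)
      (fun m => (dN k m).mul (dN m j)) (pdy i)
    refine h.trans (Finset.sum_congr rfl fun m _ => ?_)
    refine (fd_mul (dN k m) (dN m j) (pdy i)).trans ?_
    congr 1
    · exact congrArg (· * Nc G m j p) (Dd_swap hgk (pdy m) (pdy i) p)
    · exact congrArg (Nc G k m p * ·) (Dd_swap (hg hG m) (pdy j) (pdy i) p)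
  have e3 : fderiv ℝ (vfd (Ssp G) (Nc G k j)) p (pdy i)
      = fderiv ℝ (Nc G k j) p (pdx i)
        - 2 * (∑ m, Nc G m i p * fderiv ℝ (Nc G k j) p (pdy m))
        + vfd (Ssp G) (Dd (Nc G k j) (pdy i)) p := fderiv_vfd hG (hN hG k j) p i
  calc fderiv ℝ (Rjac G k j) p (pdy i)
      = fderiv ℝ (fun q : E n => 2 * fderiv ℝ (fun q' => G q' k) q (pdx j)
            - ∑ m, Nc G k m q * Nc G m j q) p (pdy i)
          - fderiv ℝ (vfd (Ssp G) (Nc G k j)) p (pdy i) :=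
        fd_sub (d1.sub d2) d3 (pdy i)
    _ = (fderiv ℝ (fun q : E n => 2 * fderiv ℝ (fun q' => G q' k) q (pdx j)) p (pdy i)
          - fderiv ℝ (fun q : E n => ∑ m, Nc G k m q * Nc G m j q) p (pdy i))
          - fderiv ℝ (vfd (Ssp G) (Nc G k j)) p (pdy i) :=
        congrArg (· - fderiv ℝ (vfd (Ssp G) (Nc G k j)) p (pdy i)) (fd_sub d1 d2 (pdy i))
    _ = _ := by rw [e1, e2, e3]

lemma fderiv_ddx (G : E n → Fin n → ℝ) (f : E n → ℝ) (j : Fin n) (p : E n) :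
    fderiv ℝ f p (ddx G j p)
      = fderiv ℝ f p (pdx j) - ∑ l, Nc G l j p * fderiv ℝ f p (pdy l) := by
  have h := clm_decomp (fderiv ℝ f p) 0 (Pi.single j 1) (fun l => -(Nc G l j p))
  have h0 : fderiv ℝ f p (ddx G j p)
      = fderiv ℝ f p ((0 : ℝ), (Pi.single j 1 : Fin n → ℝ), fun l => -(Nc G l j p)) := rfl
  rw [h0, h, sum_single_mul (fun l => fderiv ℝ f p (pdx l)) j]
  have h2 : (∑ l, -(Nc G l j p) * fderiv ℝ f p (pdy l))
      = -(∑ l, Nc G l j p * fderiv ℝ f p (pdy l)) := by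
    rw [← Finset.sum_neg_distrib]
    exact Finset.sum_congr rfl fun l _ => by ring
  rw [h2]
  ring

lemma Rcur_expand (G : E n → Fin n → ℝ) (k i j : Fin n) (p : E n) :
    Rcur G k i j p
      = (fderiv ℝ (Nc G k i) p (pdx j) - ∑ m, Nc G m j p * fderiv ℝ (Nc G k i) p (pdy m))
        - (fderiv ℝ (Nc G k j) p (pdx i)
            - ∑ m, Nc G m i p * fderiv ℝ (Nc G k j) p (pdy m)) := by
  show fderiv ℝ (Nc G k i) p (ddx G j p) - fderiv ℝ (Nc G k j) p (ddx G i p) = _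
  rw [fderiv_ddx G (Nc G k i) j p, fderiv_ddx G (Nc G k j) i p]

end S6


/-- The Jacobi endomorphism components and the curvature
components satisfy `∂Rᵏⱼ/∂yⁱ − ∂Rᵏᵢ/∂yʲ = 3 Rᵏᵢⱼ`. -/
theorem stmt6 (n : ℕ) (hn : 1 ≤ n) (G : E n → Fin n → ℝ) (hG : Cinf G) :
    ∀ (i j k : Fin n) (p : E n),
      fderiv ℝ (Rjac G k j) p (pdy i) - fderiv ℝ (Rjac G k i) p (pdy j)
        = 3 * Rcur G k i j p := by
  intro i j k p
  rw [S6.Rjac_deriv hG k j i p, S6.Rjac_deriv hG k i j p, S6.Rcur_expand G k i j p]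
  rw [show S6.Dd (Nc G k i) (pdy j) = S6.Dd (Nc G k j) (pdy i) from
    funext fun q => S6.Dd_swap (S6.hg hG k) (pdy i) (pdy j) q]
  have tw : (∑ m, (fderiv ℝ (Nc G k j) p (pdy m) * Nc G m i p
        + Nc G k m p * fderiv ℝ (Nc G m j) p (pdy i)))
      = ∑ m, (fderiv ℝ (Nc G k j) p (pdy m) * Nc G m i p
          + Nc G k m p * fderiv ℝ (Nc G m i) p (pdy j)) :=
    Finset.sum_congr rfl fun m _ => by
      rw [show fderiv ℝ (Nc G m j) p (pdy i) = fderiv ℝ (Nc G m i) p (pdy j) from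
        S6.Dd_swap (S6.hg hG m) (pdy j) (pdy i) p]
  rw [tw]
  have c1 : (∑ m, fderiv ℝ (Nc G k i) p (pdy m) * Nc G m j p)
      = ∑ m, Nc G m j p * fderiv ℝ (Nc G k i) p (pdy m) :=
    Finset.sum_congr rfl fun m _ => mul_comm _ _
  have c2 : (∑ m, fderiv ℝ (Nc G k j) p (pdy m) * Nc G m i p)
      = ∑ m, Nc G m i p * fderiv ℝ (Nc G k j) p (pdy m) :=
    Finset.sum_congr rfl fun m _ => mul_comm _ _
  simp only [Finset.sum_add_distrib]
  rw [c1, c2]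
  ring
end
end

section
/- Let θ be a semi-basic 1-form on E. Then d_Jθ = 0 if and only if θ is the Poincaré–Cartan 1-form of a Lagrangian function, namely θ(X) = θ(S)·dt(X) + d(θ(S))(JX) for all vector fields X; in that case the Lagrangian is L = i_Sθ = θ(S) and θ = θ_L = L dt + dL∘J. -/
noncomputable section

variable {n : ℕ}

/-! ### Auxiliary material for the proof of `stmt10` -/

namespace Stmt10Aux

open ContinuousLinearMap

variable {n : ℕ}

/-- projection onto the `t` coordinate, as a continuous linear map -/
def c1 : E n →L[ℝ] ℝ := ContinuousLinearMap.fst ℝ ℝ ((Fin n → ℝ) × (Fin n → ℝ))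

/-- projection onto the `xⁱ` coordinate -/
def cx (i : Fin n) : E n →L[ℝ] ℝ :=
  (ContinuousLinearMap.proj i).comp
    ((ContinuousLinearMap.fst ℝ (Fin n → ℝ) (Fin n → ℝ)).comp
      (ContinuousLinearMap.snd ℝ ℝ ((Fin n → ℝ) × (Fin n → ℝ))))

/-- projection onto the `yⁱ` coordinate -/
def cy (i : Fin n) : E n →L[ℝ] ℝ :=
  (ContinuousLinearMap.proj i).comp
    ((ContinuousLinearMap.snd ℝ (Fin n → ℝ) (Fin n → ℝ)).comp
      (ContinuousLinearMap.snd ℝ ℝ ((Fin n → ℝ) × (Fin n → ℝ))))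

@[simp] lemma c1_apply (w : E n) : c1 w = w.1 := rfl
@[simp] lemma cx_apply (i : Fin n) (w : E n) : cx i w = w.2.1 i := rfl
@[simp] lemma cy_apply (i : Fin n) (w : E n) : cy i w = w.2.2 i := rfl

lemma cinf_diff {f : E n → E n} (hf : Cinf f) : Differentiable ℝ f :=
  hf.differentiable (by simp)

lemma cinf_diff' {f : E n → ℝ} (hf : Cinf f) : Differentiable ℝ f :=
  hf.differentiable (by simp)

/-- Schwarz symmetry of second derivatives for a `C^∞` function. -/
lemma schwarz {f : E n → ℝ} (hf : Cinf f) (p v w : E n) :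
    fderiv ℝ (fun q => fderiv ℝ f q v) p w = fderiv ℝ (fun q => fderiv ℝ f q w) p v := by
  have h1 : DifferentiableAt ℝ (fderiv ℝ f) p := by
    have := (hf.fderiv_right (m := (⊤:ℕ∞)) (by simp)).differentiable
      (by simp)
    exact this p
  rw [fderiv_clm_apply h1 (differentiableAt_const v), fderiv_clm_apply h1 (differentiableAt_const w)]
  simp only [fderiv_fun_const, Pi.zero_apply, ContinuousLinearMap.comp_zero, zero_add,
    ContinuousLinearMap.add_apply, ContinuousLinearMap.flip_apply]
  exact (hf.contDiffAt.isSymmSndFDerivAt (by simp; exact WithTop.coe_le_coe.mpr (le_top : (2:ℕ∞) ≤ ⊤))) w v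

/-- `ypart c` as a sum of basis vectors. -/
lemma ypart_eq_sum (c : Fin n → ℝ) : (ypart c : E n) = ∑ j, c j • pdy j := by
  unfold pdy ypart
  rw [Prod.ext_iff, Prod.ext_iff]
  refine ⟨by simp [Prod.fst_sum], by simp [Prod.snd_sum, Prod.fst_sum], ?_⟩
  simp only [Prod.snd_sum, Prod.smul_mk]
  funext x
  simp [Finset.sum_apply, Pi.single_apply]

/-- Directional derivative along a `y`-direction, expanded on the basis. -/
lemma fderiv_ypart {f : E n → ℝ} {p : E n} (hf : DifferentiableAt ℝ f p) (c : Fin n → ℝ) :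
    fderiv ℝ f p (ypart c) = ∑ j, c j * fderiv ℝ f p (pdy j) := by
  rw [ypart_eq_sum, map_sum]
  simp [smul_eq_mul]

/-- The bilinear-form value of `dθ` for the semi-basic form `θ = θ₀ dt + Σ θᵢ δxⁱ`. -/
def Ff (θ0 : E n → ℝ) (θc : Fin n → E n → ℝ) (p a b : E n) : ℝ :=
  fderiv ℝ θ0 p a * b.1 - fderiv ℝ θ0 p b * a.1
    + ∑ i, (fderiv ℝ (θc i) p a * (b.2.1 i - p.2.2 i * b.1)
        - fderiv ℝ (θc i) p b * (a.2.1 i - p.2.2 i * a.1)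
        - θc i p * (a.2.2 i * b.1 - b.2.2 i * a.1))

variable {θ0 : E n → ℝ} {θc : Fin n → E n → ℝ}

lemma dir_sbform (h0 : Cinf θ0) (hc : ∀ i, Cinf (θc i)) {Y : E n → E n} {p : E n}
    (hY : DifferentiableAt ℝ Y p) (v : E n) :
    fderiv ℝ (fun q => sbform θ0 θc q (Y q)) p v
      = fderiv ℝ θ0 p v * (Y p).1 + θ0 p * (fderiv ℝ Y p v).1
        + ∑ i, (fderiv ℝ (θc i) p v * ((Y p).2.1 i - p.2.2 i * (Y p).1)
            + θc i p * ((fderiv ℝ Y p v).2.1 i - v.2.2 i * (Y p).1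
                - p.2.2 i * (fderiv ℝ Y p v).1)) := by
  have hY' : HasFDerivAt Y (fderiv ℝ Y p) p := hY.hasFDerivAt
  have h0' : HasFDerivAt θ0 (fderiv ℝ θ0 p) p := ((cinf_diff' h0) p).hasFDerivAt
  have h1Y : HasFDerivAt (fun q => c1 (Y q)) (c1.comp (fderiv ℝ Y p)) p :=
    (c1.hasFDerivAt (x := Y p)).comp p hY'
  have hxY : ∀ i : Fin n, HasFDerivAt (fun q => cx i (Y q)) ((cx i).comp (fderiv ℝ Y p)) p :=
    fun i => ((cx i).hasFDerivAt (x := Y p)).comp p hY'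
  have hyq : ∀ i : Fin n, HasFDerivAt (fun q : E n => cy i q) (cy i) p :=
    fun i => (cy i).hasFDerivAt (x := p)
  have H := (h0'.fun_mul h1Y).fun_add
    (HasFDerivAt.fun_sum (u := Finset.univ) fun i _ =>
      (((cinf_diff' (hc i)) p).hasFDerivAt.fun_mul ((hxY i).fun_sub ((hyq i).fun_mul h1Y))))
  have Heq : (fun q => sbform θ0 θc q (Y q))
      = fun q => θ0 q * c1 (Y q) + ∑ i, θc i q * (cx i (Y q) - cy i q * c1 (Y q)) := rfl
  rw [Heq, H.fderiv]
  simp only [ContinuousLinearMap.add_apply, ContinuousLinearMap.smul_apply,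
    ContinuousLinearMap.sub_apply, ContinuousLinearMap.comp_apply,
    ContinuousLinearMap.coe_sum', Finset.sum_apply, c1_apply, cx_apply, cy_apply,
    smul_eq_mul]
  refine congrArg₂ (· + ·) (by ring) (Finset.sum_congr rfl fun i _ => by ring)

lemma sbform_apply' (p w : E n) :
    sbform θ0 θc p w = θ0 p * w.1 + ∑ i, θc i p * (w.2.1 i - p.2.2 i * w.1) := rfl

lemma extD_sbform (h0 : Cinf θ0) (hc : ∀ i, Cinf (θc i)) {X Y : E n → E n} {p : E n}
    (hX : DifferentiableAt ℝ X p) (hY : DifferentiableAt ℝ Y p) :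
    extD (sbform θ0 θc) X Y p = Ff θ0 θc p (X p) (Y p) := by
  unfold extD Ff
  rw [dir_sbform h0 hc hY (X p), dir_sbform h0 hc hX (Y p), sbform_apply']
  simp only [lieb, Prod.fst_sub, Prod.snd_sub, Pi.sub_apply]
  set u := fderiv ℝ Y p (X p)
  set v := fderiv ℝ X p (Y p)
  set a := X p
  set b := Y p
  have h1 : (∑ i, (fderiv ℝ (θc i) p a * (b.2.1 i - p.2.2 i * b.1)
        + θc i p * (u.2.1 i - a.2.2 i * b.1 - p.2.2 i * u.1)))
      - (∑ i, (fderiv ℝ (θc i) p b * (a.2.1 i - p.2.2 i * a.1)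
        + θc i p * (v.2.1 i - b.2.2 i * a.1 - p.2.2 i * v.1)))
      - (∑ i, θc i p * (u.2.1 i - v.2.1 i - p.2.2 i * (u.1 - v.1)))
      = ∑ i, (fderiv ℝ (θc i) p a * (b.2.1 i - p.2.2 i * b.1)
        - fderiv ℝ (θc i) p b * (a.2.1 i - p.2.2 i * a.1)
        - θc i p * (a.2.2 i * b.1 - b.2.2 i * a.1)) := by
    rw [← Finset.sum_sub_distrib, ← Finset.sum_sub_distrib]
    exact Finset.sum_congr rfl fun i _ => by ring
  linear_combination h1

lemma Jv_diff {X : E n → E n} (hX : Cinf X) : Differentiable ℝ (fun q => Jv q (X q)) := by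
  have h1 : Differentiable ℝ X := cinf_diff hX
  have h2 : Differentiable ℝ (fun q : E n => (X q).1) := fun p => (c1.differentiable.comp h1) p
  have h3 : ∀ i, Differentiable ℝ (fun q : E n => (X q).2.1 i) :=
    fun i p => ((cx i).differentiable.comp h1) p
  refine (differentiable_const _).prodMk ((differentiable_const _).prodMk ?_)
  rw [differentiable_pi]
  intro i
  exact (h3 i).sub ((cy i).differentiable.mul h2)

lemma dJf_sbform (h0 : Cinf θ0) (hc : ∀ i, Cinf (θc i)) {X Y : E n → E n}
    (hX : Cinf X) (hY : Cinf Y) (p : E n) :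
    dJf (sbform θ0 θc) X Y p
      = Ff θ0 θc p (Jv p (X p)) (Y p) + Ff θ0 θc p (X p) (Jv p (Y p)) := by
  unfold dJf
  rw [extD_sbform h0 hc ((Jv_diff hX) p) ((cinf_diff hY) p),
    extD_sbform h0 hc ((cinf_diff hX) p) ((Jv_diff hY) p)]

lemma sum_swap_sym {n : ℕ} (A B : Fin n → ℝ) (d : Fin n → Fin n → ℝ)
    (hd : ∀ i j, d i j = d j i) :
    (∑ i, (∑ j, A j * d i j) * B i) = ∑ i, (∑ j, B j * d i j) * A i :=
  calc (∑ i, (∑ j, A j * d i j) * B i) = ∑ i, ∑ j, A j * d i j * B i :=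
        Finset.sum_congr rfl fun i _ => Finset.sum_mul _ _ _
    _ = ∑ j, ∑ i, A j * d i j * B i := Finset.sum_comm
    _ = ∑ j, (∑ i, B i * d j i) * A j := Finset.sum_congr rfl fun j _ => by
        rw [Finset.sum_mul]
        exact Finset.sum_congr rfl fun i _ => by rw [hd i j]; ring
    _ = ∑ i, (∑ j, B j * d i j) * A i := rfl

variable {θ0 : E n → ℝ} {θc : Fin n → E n → ℝ}

lemma Ff_vert1 (h0 : Cinf θ0) (hc : ∀ i, Cinf (θc i)) (p a b : E n) :
    Ff θ0 θc p (ypart (fun k => dxi k p a)) b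
      = (∑ j, dxi j p a * fderiv ℝ θ0 p (pdy j)) * b.1
        + ∑ i, ((∑ j, dxi j p a * fderiv ℝ (θc i) p (pdy j)) * dxi i p b
            - θc i p * (dxi i p a * b.1)) := by
  unfold Ff
  rw [fderiv_ypart ((cinf_diff' h0) p)]
  have hh : ∀ i : Fin n, fderiv ℝ (θc i) p (ypart fun k => dxi k p a)
      = ∑ j, dxi j p a * fderiv ℝ (θc i) p (pdy j) :=
    fun i => fderiv_ypart ((cinf_diff' (hc i)) p) _
  simp only [hh]
  have h1 : (ypart (fun k => dxi k p a) : E n).1 = 0 := rfl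
  have h21 : ∀ i, (ypart (fun k => dxi k p a) : E n).2.1 i = 0 := fun _ => rfl
  have h22 : ∀ i, (ypart (fun k => dxi k p a) : E n).2.2 i = dxi i p a := fun _ => rfl
  simp only [h1, h21, h22]
  refine congrArg₂ (· + ·) (by ring) (Finset.sum_congr rfl fun i _ => ?_)
  simp only [dxi]
  ring

lemma Ff_vert2 (h0 : Cinf θ0) (hc : ∀ i, Cinf (θc i)) (p a b : E n) :
    Ff θ0 θc p a (ypart (fun k => dxi k p b))
      = -((∑ j, dxi j p b * fderiv ℝ θ0 p (pdy j)) * a.1)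
        + ∑ i, (θc i p * (dxi i p b * a.1)
            - (∑ j, dxi j p b * fderiv ℝ (θc i) p (pdy j)) * dxi i p a) := by
  unfold Ff
  rw [fderiv_ypart ((cinf_diff' h0) p)]
  have hh : ∀ i : Fin n, fderiv ℝ (θc i) p (ypart fun k => dxi k p b)
      = ∑ j, dxi j p b * fderiv ℝ (θc i) p (pdy j) :=
    fun i => fderiv_ypart ((cinf_diff' (hc i)) p) _
  simp only [hh]
  have h1 : (ypart (fun k => dxi k p b) : E n).1 = 0 := rfl
  have h21 : ∀ i, (ypart (fun k => dxi k p b) : E n).2.1 i = 0 := fun _ => rfl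
  have h22 : ∀ i, (ypart (fun k => dxi k p b) : E n).2.2 i = dxi i p b := fun _ => rfl
  simp only [h1, h21, h22]
  refine congrArg₂ (· + ·) (by ring) (Finset.sum_congr rfl fun i _ => ?_)
  simp only [dxi]
  ring

lemma Ffpair (h0 : Cinf θ0) (hc : ∀ i, Cinf (θc i)) (p a b : E n) :
    Ff θ0 θc p (Jv p a) b + Ff θ0 θc p a (Jv p b)
      = ((∑ j, dxi j p a * fderiv ℝ θ0 p (pdy j)) - ∑ j, θc j p * dxi j p a) * b.1
        - ((∑ j, dxi j p b * fderiv ℝ θ0 p (pdy j)) - ∑ j, θc j p * dxi j p b) * a.1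
        + ((∑ i, (∑ j, dxi j p a * fderiv ℝ (θc i) p (pdy j)) * dxi i p b)
            - (∑ i, (∑ j, dxi j p b * fderiv ℝ (θc i) p (pdy j)) * dxi i p a)) := by
  have hja : Jv p a = ypart (fun k => dxi k p a) := rfl
  have hjb : Jv p b = ypart (fun k => dxi k p b) := rfl
  rw [hja, hjb, Ff_vert1 h0 hc p a b, Ff_vert2 h0 hc p a b]
  have t1 : (∑ i, θc i p * (dxi i p a * b.1)) = (∑ j, θc j p * dxi j p a) * b.1 := by
    rw [Finset.sum_mul]; exact Finset.sum_congr rfl fun i _ => by ring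
  have t2 : (∑ i, θc i p * (dxi i p b * a.1)) = (∑ j, θc j p * dxi j p b) * a.1 := by
    rw [Finset.sum_mul]; exact Finset.sum_congr rfl fun i _ => by ring
  rw [Finset.sum_sub_distrib, Finset.sum_sub_distrib, t1, t2]
  ring

end Stmt10Aux

/-- A semi-basic 1-form `θ = θ₀ dt + Σᵢ θᵢ δxⁱ` on `E` satisfies
`d_Jθ = 0` if and only if it is the Poincaré–Cartan 1-form of a Lagrangian:
`θ(w) = θ(S)·dt(w) + d(θ(S))(Jw)` for all tangent vectors `w`; in that case the
Lagrangian is `L = i_Sθ = θ(S)` and `θ = θ_L = L dt + dL∘J`. -/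
theorem stmt10 (n : ℕ) (hn : 1 ≤ n) (G : E n → Fin n → ℝ) (hG : Cinf G)
    (θ0 : E n → ℝ) (θc : Fin n → E n → ℝ) (h0 : Cinf θ0) (hc : ∀ i, Cinf (θc i)) :
    (∀ X Y : E n → E n, Cinf X → Cinf Y → ∀ p : E n, dJf (sbform θ0 θc) X Y p = 0)
    ↔ (∀ (p : E n) (w : E n),
        sbform θ0 θc p w
          = sbform θ0 θc p (Ssp G p) * w.1
            + fderiv ℝ (fun q => sbform θ0 θc q (Ssp G q)) p (Jv p w)) := by
  open Stmt10Aux in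
  -- `θ(S) = θ0` as functions
  have hfun : (fun q => sbform θ0 θc q (Ssp G q)) = θ0 := by
    funext q
    simp [sbform, Ssp, dxi]
  have hJpdx : ∀ (p : E n) (i : Fin n), Jv p (pdx i) = pdy i := by
    intro p i
    unfold Jv pdy pdx dxi ypart
    norm_num
  have hsb_pdx : ∀ (p : E n) (i : Fin n), sbform θ0 θc p (pdx i) = θc i p := by
    intro p i
    simp [sbform, dxi, pdx, Pi.single_apply]
  -- single-sum collapses
  have hsingle : ∀ (f : Fin n → ℝ) (i : Fin n), (∑ j, (Pi.single i 1 : Fin n → ℝ) j * f j) = f i := by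
    intro f i
    simp [Pi.single_apply, ite_mul]
  have hsingle' : ∀ (f : Fin n → ℝ) (i : Fin n), (∑ j, f j * (Pi.single i 1 : Fin n → ℝ) j) = f i := by
    intro f i
    simp [Pi.single_apply, mul_ite]
  have hdxi_pdx : ∀ (p : E n) (i k : Fin n), dxi k p (pdx i) = (Pi.single i 1 : Fin n → ℝ) k := by
    intro p i k
    simp [dxi, pdx]
  have hdxi_pdt : ∀ (p : E n) (k : Fin n), dxi k p ((1:ℝ), 0, 0) = -p.2.2 k := by
    intro p k
    simp [dxi]
  -- The iff RHS is equivalent to: `θc i = ∂θ0/∂yⁱ`.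
  have hRHS : (∀ (p : E n) (w : E n),
        sbform θ0 θc p w
          = sbform θ0 θc p (Ssp G p) * w.1
            + fderiv ℝ (fun q => sbform θ0 θc q (Ssp G q)) p (Jv p w))
      ↔ ∀ (i : Fin n) (p : E n), θc i p = fderiv ℝ θ0 p (pdy i) := by
    rw [hfun]
    constructor
    · intro H i p
      have h := H p (pdx i)
      rw [hsb_pdx, hJpdx] at h
      have hS : sbform θ0 θc p (Ssp G p) = θ0 p := congrFun hfun p
      rw [hS] at h
      have hp1 : (pdx i : E n).1 = 0 := rfl
      rw [hp1, mul_zero, zero_add] at h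
      exact h
    · intro H p w
      have hS : sbform θ0 θc p (Ssp G p) = θ0 p := congrFun hfun p
      rw [hS]
      have hJw : Jv p w = ypart (fun k => dxi k p w) := rfl
      rw [hJw, fderiv_ypart ((cinf_diff' h0) p), sbform_apply']
      congr 1
      refine Finset.sum_congr rfl fun i _ => ?_
      rw [← H i p]
      simp only [dxi]
      ring
  rw [hRHS]
  constructor
  · -- forward direction
    intro hJ
    have hconst : ∀ (p a b : E n),
        ((∑ j, dxi j p a * fderiv ℝ θ0 p (pdy j)) - ∑ j, θc j p * dxi j p a) * b.1
          - ((∑ j, dxi j p b * fderiv ℝ θ0 p (pdy j)) - ∑ j, θc j p * dxi j p b) * a.1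
          + ((∑ i, (∑ j, dxi j p a * fderiv ℝ (θc i) p (pdy j)) * dxi i p b)
              - (∑ i, (∑ j, dxi j p b * fderiv ℝ (θc i) p (pdy j)) * dxi i p a)) = 0 := by
      intro p a b
      have h := hJ (fun _ => a) (fun _ => b) contDiff_const contDiff_const p
      rw [dJf_sbform h0 hc contDiff_const contDiff_const p] at h
      have h' : Ff θ0 θc p (Jv p a) b + Ff θ0 θc p a (Jv p b) = 0 := h
      rw [Ffpair h0 hc p a b] at h'
      exact h'
    have hsym : ∀ (p : E n) (i j : Fin n),
        fderiv ℝ (θc j) p (pdy i) = fderiv ℝ (θc i) p (pdy j) := by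
      intro p i j
      have h := hconst p (pdx i) (pdx j)
      simp only [hdxi_pdx] at h
      have hp1 : ∀ k : Fin n, (pdx k : E n).1 = 0 := fun _ => rfl
      simp only [hp1, mul_zero, zero_mul, sub_zero, zero_sub, zero_add] at h
      simp only [hsingle, hsingle'] at h
      linarith [h]
    intro i p
    have h := hconst p (pdx i) ((1:ℝ), 0, 0)
    simp only [hdxi_pdx, hdxi_pdt] at h
    have hp1 : (pdx i : E n).1 = 0 := rfl
    have ht1 : (((1:ℝ), 0, 0) : E n).1 = 1 := rfl
    simp only [hp1, ht1, mul_zero, zero_mul, sub_zero, zero_sub, mul_one, neg_zero,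
      add_zero, zero_add] at h
    simp only [hsingle, hsingle'] at h
    -- h : (dθ0ᵢ - θcᵢ) - 0 + ((∑ k, dθcₖᵢ * -yₖ) - (∑ k, (∑ j, -yⱼ * dθcₖⱼ ... )) ...
    have hswap : (∑ k, (-p.2.2 k) * fderiv ℝ (θc k) p (pdy i))
        = ∑ k, (-p.2.2 k) * fderiv ℝ (θc i) p (pdy k) :=
      Finset.sum_congr rfl fun k _ => by rw [hsym p i k]
    have hswap' : (∑ k, fderiv ℝ (θc k) p (pdy i) * (-p.2.2 k))
        = ∑ k, fderiv ℝ (θc i) p (pdy k) * (-p.2.2 k) :=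
      Finset.sum_congr rfl fun k _ => by rw [hsym p i k]
    have hcomm : (∑ k, fderiv ℝ (θc i) p (pdy k) * (-p.2.2 k))
        = ∑ k, (-p.2.2 k) * fderiv ℝ (θc i) p (pdy k) :=
      Finset.sum_congr rfl fun k _ => mul_comm _ _
    linarith [h, hswap, hswap', hcomm]
  · -- backward direction
    intro H X Y hX hY p
    rw [dJf_sbform h0 hc hX hY p, Ffpair h0 hc p (X p) (Y p)]
    have hsym2 : ∀ (i j : Fin n),
        fderiv ℝ (θc i) p (pdy j) = fderiv ℝ (θc j) p (pdy i) := by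
      intro i j
      have e1 : θc i = fun q => fderiv ℝ θ0 q (pdy i) := funext fun q => H i q
      have e2 : θc j = fun q => fderiv ℝ θ0 q (pdy j) := funext fun q => H j q
      rw [e1, e2, schwarz h0 p (pdy i) (pdy j)]
    have z1 : (∑ j, dxi j p (X p) * fderiv ℝ θ0 p (pdy j))
        = ∑ j, θc j p * dxi j p (X p) :=
      Finset.sum_congr rfl fun j _ => by rw [H j p]; ring
    have z2 : (∑ j, dxi j p (Y p) * fderiv ℝ θ0 p (pdy j))
        = ∑ j, θc j p * dxi j p (Y p) :=
      Finset.sum_congr rfl fun j _ => by rw [H j p]; ring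
    have c3 : (∑ i, (∑ j, dxi j p (X p) * fderiv ℝ (θc i) p (pdy j)) * dxi i p (Y p))
        = ∑ i, (∑ j, dxi j p (Y p) * fderiv ℝ (θc i) p (pdy j)) * dxi i p (X p) :=
      sum_swap_sym _ _ _ (fun i j => hsym2 i j)
    rw [z1, z2, c3]
    ring
end
end
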